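/- Fix m, n ≥ 1. Let O ⊆ [m] with #O odd and U ⊆ N with #U odd, and let Ev(O,U) = {S ⊆ [m+n] : S ≠ ∅, #(S ∩ O) is even, and #(S ∩ U) is even}. Then: (a) Ev(O,U) ⊆ D̄_{m,n}; (b) for every T ⊆ [m+n] with T ∉ {∅, O, U, O ∪ U}, the number of S ∈ Ev(O,U) with #(S ∩ T) odd equals 2^(m+n−3); and (c) for T ∈ {∅, O, U, O ∪ U}, the number of S ∈ Ev(O,U) with #(S ∩ T) odd is 0. In particular, Σ_{S ∈ Ev(O,U)} x_S ≤ 2^(m+n−3) is valid on GCut(D_{m,n}), with equality at the vertex d^T exactly when T ∉ {∅, O, U, O ∪ U}. -/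

import Mathlib

open Finset

section AuxStmt14

variable {V : Type*} [Fintype V] [DecidableEq V]

/-- parity vector of `S` with respect to `O`, `U`, `T`. -/
def parP14 (O U T : Finset V) (S : Finset V) : ZMod 2 × ZMod 2 × ZMod 2 :=
  (((S ∩ O).card : ZMod 2), ((S ∩ U).card : ZMod 2), ((S ∩ T).card : ZMod 2))

lemma cast_card_symmDiff14 (A B : Finset V) :
    (((symmDiff A B).card : ZMod 2)) = (A.card : ZMod 2) + (B.card : ZMod 2) := by
  have h1 : (symmDiff A B).card = (A \ B).card + (B \ A).card := by
    rw [symmDiff_def]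
    exact Finset.card_union_of_disjoint disjoint_sdiff_sdiff
  have h2 := Finset.card_sdiff_add_card_inter A B
  have h3 := Finset.card_sdiff_add_card_inter B A
  rw [Finset.inter_comm B A] at h3
  have key : (symmDiff A B).card + 2 * (A ∩ B).card = A.card + B.card := by omega
  have := congrArg (Nat.cast : ℕ → ZMod 2) key
  push_cast at this
  have h4 : (2 : ZMod 2) = 0 := rfl
  rw [h4, zero_mul, add_zero] at this
  exact this

lemma parP14_symmDiff (O U T : Finset V) (S W : Finset V) :
    parP14 O U T (symmDiff S W) = parP14 O U T S + parP14 O U T W := by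
  unfold parP14
  have key : ∀ A : Finset V, (((symmDiff S W ∩ A).card : ZMod 2))
      = ((S ∩ A).card : ZMod 2) + ((W ∩ A).card : ZMod 2) := by
    intro A
    have : symmDiff S W ∩ A = symmDiff (S ∩ A) (W ∩ A) := by
      simp only [← Finset.inf_eq_inter]
      exact inf_symmDiff_distrib_right S W A
    rw [this, cast_card_symmDiff14]
  rw [Prod.mk_add_mk, Prod.mk_add_mk, key O, key U, key T]

lemma zmod2_cases : ∀ z : ZMod 2, z = 0 ∨ z = 1 := by decide

lemma zmod2_cast_zero (k : ℕ) : ((k : ZMod 2) = 0) ↔ Even k := by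
  rw [ZMod.natCast_eq_zero_iff, Nat.even_iff]
  omega

lemma zmod2_cast_one (k : ℕ) : ((k : ZMod 2) = 1) ↔ Odd k := by
  have h : ∀ z : ZMod 2, z = 1 ↔ ¬ z = 0 := by decide
  rw [h (k : ZMod 2), zmod2_cast_zero, Nat.not_even_iff_odd]

/-- key counting lemma: if the parity map is "surjective via generators", each fiber has
cardinality `2 ^ (|V| - 3)`. -/
lemma count_key14 (O U T : Finset V)
    (w1 w2 w3 : Finset V)
    (h1 : parP14 O U T w1 = (1, 0, 0))
    (h2 : parP14 O U T w2 = (0, 1, 0))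
    (h3 : parP14 O U T w3 = (0, 0, 1)) :
    (univ.filter (fun S : Finset V => parP14 O U T S = (0, 0, 1))).card
      = 2 ^ (Fintype.card V - 3) := by
  set P := parP14 O U T with hP
  have hz : P ∅ = 0 := by
    simp [hP, parP14, Prod.ext_iff]
  have surj : ∀ x : ZMod 2 × ZMod 2 × ZMod 2, ∃ W : Finset V, P W = x := by
    rintro ⟨a, b, c⟩
    refine ⟨symmDiff (symmDiff (if a = 1 then w1 else ∅) (if b = 1 then w2 else ∅))
        (if c = 1 then w3 else ∅), ?_⟩
    rw [hP, parP14_symmDiff, parP14_symmDiff, ← hP]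
    rcases zmod2_cases a with ha | ha <;> rcases zmod2_cases b with hb | hb <;>
      rcases zmod2_cases c with hc | hc <;>
      subst ha <;> subst hb <;> subst hc <;>
      simp [h1, h2, h3, hz, Prod.ext_iff] <;> decide
  -- all fibers have the same cardinality
  have fiber_eq : ∀ x y : ZMod 2 × ZMod 2 × ZMod 2,
      (univ.filter (fun S : Finset V => P S = x)).card
        = (univ.filter (fun S : Finset V => P S = y)).card := by
    intro x y
    obtain ⟨W, hW⟩ := surj (y - x)
    apply Finset.card_bij (fun S _ => symmDiff S W)
    · intro S hS
      simp only [Finset.mem_filter, Finset.mem_univ, true_and] at hS ⊢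
      rw [hP, parP14_symmDiff, ← hP, hS, hW]
      abel
    · intro S hS S' hS' h
      have := congrArg (fun X => symmDiff X W) h
      simpa [symmDiff_symmDiff_cancel_right] using this
    · intro S' hS'
      refine ⟨symmDiff S' W, ?_, ?_⟩
      · simp only [Finset.mem_filter, Finset.mem_univ, true_and] at hS' ⊢
        rw [hP, parP14_symmDiff, ← hP, hS', hW]
        have : ∀ g : ZMod 2 × ZMod 2 × ZMod 2, y + (y - x) = x := by
          intro g
          have : ∀ u v : ZMod 2 × ZMod 2 × ZMod 2, u + (u - v) = v := by decide
          exact this y x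
        exact this 0
      · rw [symmDiff_symmDiff_cancel_right]
  have total : (univ : Finset (Finset V)).card
      = ∑ x ∈ (univ : Finset (ZMod 2 × ZMod 2 × ZMod 2)),
          (univ.filter (fun S : Finset V => P S = x)).card :=
    Finset.card_eq_sum_card_fiberwise (fun x _ => Finset.mem_univ _)
  set c := (univ.filter (fun S : Finset V => P S = (0, 0, 1))).card with hc
  have total' : 2 ^ (Fintype.card V) = 8 * c := by
    have h8 : Fintype.card (ZMod 2 × ZMod 2 × ZMod 2) = 8 := by decide
    calc 2 ^ (Fintype.card V) = (univ : Finset (Finset V)).card := by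
          rw [Finset.card_univ, Fintype.card_finset]
      _ = ∑ x ∈ (univ : Finset (ZMod 2 × ZMod 2 × ZMod 2)),
            (univ.filter (fun S : Finset V => P S = x)).card := total
      _ = ∑ _x ∈ (univ : Finset (ZMod 2 × ZMod 2 × ZMod 2)), c := by
          apply Finset.sum_congr rfl
          intro x _
          exact fiber_eq x (0, 0, 1)
      _ = 8 * c := by rw [Finset.sum_const, Finset.card_univ, h8, smul_eq_mul]
  have hcpos : 1 ≤ c := by
    obtain ⟨W, hW⟩ := surj (0, 0, 1)
    have : W ∈ univ.filter (fun S : Finset V => P S = (0, 0, 1)) := by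
      simp [hW]
    exact Finset.card_pos.mpr ⟨W, this⟩
  have hV3 : 3 ≤ Fintype.card V := by
    by_contra h
    push_neg at h
    have : 2 ^ (Fintype.card V) ≤ 2 ^ 2 := Nat.pow_le_pow_right (by norm_num) (by omega)
    omega
  have : 2 ^ (Fintype.card V) = 8 * 2 ^ (Fintype.card V - 3) := by
    have hk : Fintype.card V = 3 + (Fintype.card V - 3) := by omega
    rw [hk, pow_add]
    norm_num
  omega

lemma pair_gen14 (A B T : Finset V) (hd : Disjoint A B)
    (h1 : T ∩ A ≠ ∅) (h2 : T ∩ A ≠ A) :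
    ∃ w : Finset V, ((w ∩ A).card : ZMod 2) = 0 ∧ w ∩ B = ∅ ∧
      ((w ∩ T).card : ZMod 2) = 1 := by
  obtain ⟨a, ha⟩ := Finset.nonempty_iff_ne_empty.mpr h1
  have haT : a ∈ T := (Finset.mem_inter.mp ha).1
  have haA : a ∈ A := (Finset.mem_inter.mp ha).2
  have hsub : T ∩ A ⊆ A := Finset.inter_subset_right
  have hns : ¬ A ⊆ T ∩ A := fun h => h2 (Finset.Subset.antisymm hsub h)
  obtain ⟨b, hbA, hb⟩ := Finset.not_subset.mp hns
  have hbT : b ∉ T := fun h => hb (Finset.mem_inter.mpr ⟨h, hbA⟩)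
  have hab : a ≠ b := fun h => hbT (h ▸ haT)
  have hpairA : ({a, b} : Finset V) ⊆ A := by
    intro x hx
    rcases Finset.mem_insert.mp hx with rfl | hx
    · exact haA
    · rw [Finset.mem_singleton.mp hx]; exact hbA
  refine ⟨{a, b}, ?_, ?_, ?_⟩
  · rw [Finset.inter_eq_left.mpr hpairA,
      Finset.card_insert_of_notMem (by simp [hab]), Finset.card_singleton]
    exact ZMod.natCast_self 2
  · rw [← Finset.disjoint_iff_inter_eq_empty]
    exact hd.mono_left hpairA
  · have hpt : ({a, b} : Finset V) ∩ T = {a} := by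
      ext x
      simp only [Finset.mem_inter, Finset.mem_insert, Finset.mem_singleton]
      constructor
      · rintro ⟨rfl | rfl, hxT⟩
        · rfl
        · exact absurd hxT hbT
      · rintro rfl; exact ⟨Or.inl rfl, haT⟩
    rw [hpt, Finset.card_singleton, Nat.cast_one]

end AuxStmt14


/-- Membership in `D̄_{m,n}`: a nonempty subset `S` of `[m+n]` whose intersection with the
first block `[m]` is a proper subset of `[m]` and whose intersection with the second block
`N = {m+1,…,m+n}` is a proper subset of `N`. -/
def DFace (m n : ℕ) (S : Finset (Fin (m + n))) : Prop :=
  S.Nonempty ∧ (∃ i : Fin (m + n), i.val < m ∧ i ∉ S) ∧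
    (∃ j : Fin (m + n), m ≤ j.val ∧ j ∉ S)

instance (m n : ℕ) : DecidablePred (DFace m n) := fun S => by
  unfold DFace; infer_instance

/-- The index type of the nonempty faces of `D_{m,n}`. -/
abbrev DIdx (m n : ℕ) : Type := {S : Finset (Fin (m + n)) // DFace m n S}

/-- The vertex `d^T` of `GCut(D_{m,n})`. -/
noncomputable def dvecD (m n : ℕ) (T : Finset (Fin (m + n))) : DIdx m n → ℝ :=
  fun S => if Odd ((S.val ∩ T).card) then 1 else 0

/-- with `O ⊆ [m]`, `U ⊆ N` of odd cardinality and
`Ev(O,U) = {S ≠ ∅ : #(S ∩ O), #(S ∩ U) even}`: (a) `Ev(O,U) ⊆ D̄_{m,n}`;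
(b) for `T ∉ {∅, O, U, O ∪ U}` the number of `S ∈ Ev(O,U)` with `#(S ∩ T)` odd is
`2^(m+n−3)`; (c) for `T ∈ {∅, O, U, O ∪ U}` that number is `0`.  In particular
`Σ_{S ∈ Ev(O,U)} x_S ≤ 2^(m+n−3)` is valid on `GCut(D_{m,n})`, with equality at `d^T`
exactly when `T ∉ {∅, O, U, O ∪ U}`. -/
theorem stmt_14 (m n : ℕ) (hm : 1 ≤ m) (hn : 1 ≤ n)
    (O U : Finset (Fin (m + n)))
    (hO : ∀ i ∈ O, i.val < m) (hOodd : Odd O.card)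
    (hU : ∀ j ∈ U, m ≤ j.val) (hUodd : Odd U.card) :
    (∀ S : Finset (Fin (m + n)), S.Nonempty → Even ((S ∩ O).card) →
        Even ((S ∩ U).card) → DFace m n S) ∧
    (∀ T : Finset (Fin (m + n)), T ≠ ∅ → T ≠ O → T ≠ U → T ≠ O ∪ U →
      (Finset.univ.filter (fun S : Finset (Fin (m + n)) =>
          S.Nonempty ∧ Even ((S ∩ O).card) ∧ Even ((S ∩ U).card) ∧
            Odd ((S ∩ T).card))).card = 2 ^ (m + n - 3)) ∧
    (∀ T : Finset (Fin (m + n)), (T = ∅ ∨ T = O ∨ T = U ∨ T = O ∪ U) →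
      (Finset.univ.filter (fun S : Finset (Fin (m + n)) =>
          S.Nonempty ∧ Even ((S ∩ O).card) ∧ Even ((S ∩ U).card) ∧
            Odd ((S ∩ T).card))).card = 0) ∧
    (∀ x ∈ convexHull ℝ (Set.range (dvecD m n)),
      ∑ S : DIdx m n,
        (if Even ((S.val ∩ O).card) ∧ Even ((S.val ∩ U).card) then x S else 0) ≤
        2 ^ (m + n - 3)) ∧
    (∀ T : Finset (Fin (m + n)),
      (∑ S : DIdx m n,
          (if Even ((S.val ∩ O).card) ∧ Even ((S.val ∩ U).card) then dvecD m n T S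
            else 0) = 2 ^ (m + n - 3)) ↔
        ¬(T = ∅ ∨ T = O ∨ T = U ∨ T = O ∪ U)) := by
  -- basic facts
  have hdisj : Disjoint O U := by
    rw [Finset.disjoint_left]
    intro i hiO hiU
    exact absurd (hU i hiU) (not_le.mpr (hO i hiO))
  have hOne : O.Nonempty := Finset.card_pos.mp hOodd.pos
  have hUne : U.Nonempty := Finset.card_pos.mp hUodd.pos
  -- part (a)
  have parta : ∀ S : Finset (Fin (m + n)), S.Nonempty → Even ((S ∩ O).card) →
      Even ((S ∩ U).card) → DFace m n S := by
    intro S hS hE1 hE2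
    refine ⟨hS, ?_, ?_⟩
    · have hns : ¬ O ⊆ S := by
        intro h
        rw [Finset.inter_eq_right.mpr h] at hE1
        exact (Nat.not_even_iff_odd.mpr hOodd) hE1
      obtain ⟨i, hiO, hiS⟩ := Finset.not_subset.mp hns
      exact ⟨i, hO i hiO, hiS⟩
    · have hns : ¬ U ⊆ S := by
        intro h
        rw [Finset.inter_eq_right.mpr h] at hE2
        exact (Nat.not_even_iff_odd.mpr hUodd) hE2
      obtain ⟨j, hjU, hjS⟩ := Finset.not_subset.mp hns
      exact ⟨j, hU j hjU, hjS⟩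
  -- part (c)
  have partc : ∀ T : Finset (Fin (m + n)), (T = ∅ ∨ T = O ∨ T = U ∨ T = O ∪ U) →
      (Finset.univ.filter (fun S : Finset (Fin (m + n)) =>
          S.Nonempty ∧ Even ((S ∩ O).card) ∧ Even ((S ∩ U).card) ∧
            Odd ((S ∩ T).card))).card = 0 := by
    intro T hT
    rw [Finset.card_eq_zero, Finset.filter_eq_empty_iff]
    intro S _
    rintro ⟨hne, he1, he2, hodd⟩
    rcases hT with rfl | rfl | rfl | rfl
    · simp [Finset.inter_empty] at hodd
    · rw [Nat.even_iff] at he1; rw [Nat.odd_iff] at hodd; omega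
    · rw [Nat.even_iff] at he2; rw [Nat.odd_iff] at hodd; omega
    · have hdist : S ∩ (O ∪ U) = (S ∩ O) ∪ (S ∩ U) := Finset.inter_union_distrib_left S O U
      have hdisj2 : Disjoint (S ∩ O) (S ∩ U) :=
        hdisj.mono Finset.inter_subset_right Finset.inter_subset_right
      rw [hdist, Finset.card_union_of_disjoint hdisj2] at hodd
      rw [Nat.even_iff] at he1 he2; rw [Nat.odd_iff] at hodd; omega
  -- part (b)
  have partb : ∀ T : Finset (Fin (m + n)), T ≠ ∅ → T ≠ O → T ≠ U → T ≠ O ∪ U →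
      (Finset.univ.filter (fun S : Finset (Fin (m + n)) =>
          S.Nonempty ∧ Even ((S ∩ O).card) ∧ Even ((S ∩ U).card) ∧
            Odd ((S ∩ T).card))).card = 2 ^ (m + n - 3) := by
    intro T hTne hTO hTU hTOU
    -- generator w3
    have hw3 : ∃ w3 : Finset (Fin (m + n)), parP14 O U T w3 = (0, 0, 1) := by
      by_cases hv : ∃ v ∈ T, v ∉ O ∧ v ∉ U
      · obtain ⟨v, hvT, hvO, hvU⟩ := hv
        refine ⟨{v}, ?_⟩
        simp [parP14, Prod.ext_iff, Finset.singleton_inter_of_notMem hvO,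
          Finset.singleton_inter_of_notMem hvU, Finset.singleton_inter_of_mem hvT]
      · push_neg at hv
        have hTsub : T ⊆ O ∪ U := by
          intro v hvT
          rcases em (v ∈ O) with h | h
          · exact Finset.mem_union_left _ h
          · exact Finset.mem_union_right _ (hv v hvT h)
        by_cases hO1 : T ∩ O ≠ ∅ ∧ T ∩ O ≠ O
        · obtain ⟨w, hwa, hwb, hwc⟩ := pair_gen14 O U T hdisj hO1.1 hO1.2
          refine ⟨w, ?_⟩
          simp [parP14, Prod.ext_iff, hwa, hwb, hwc]
        · by_cases hU1 : T ∩ U ≠ ∅ ∧ T ∩ U ≠ U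
          · obtain ⟨w, hwa, hwb, hwc⟩ := pair_gen14 U O T hdisj.symm hU1.1 hU1.2
            refine ⟨w, ?_⟩
            simp [parP14, Prod.ext_iff, hwa, hwb, hwc]
          · exfalso
            push_neg at hO1 hU1
            have hTeq : T = (T ∩ O) ∪ (T ∩ U) := by
              rw [← Finset.inter_union_distrib_left, Finset.inter_eq_left.mpr hTsub]
            rcases em (T ∩ O = ∅) with h1 | h1
            · rcases em (T ∩ U = ∅) with h2 | h2
              · exact hTne (by rw [hTeq, h1, h2, Finset.union_empty])
              · exact hTU (by rw [hTeq, h1, hU1 (Finset.nonempty_iff_ne_empty.mpr h2), Finset.empty_union])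
            · rcases em (T ∩ U = ∅) with h2 | h2
              · exact hTO (by rw [hTeq, hO1 (Finset.nonempty_iff_ne_empty.mpr h1), h2, Finset.union_empty])
              · exact hTOU (by rw [hTeq, hO1 (Finset.nonempty_iff_ne_empty.mpr h1), hU1 (Finset.nonempty_iff_ne_empty.mpr h2)])
    obtain ⟨w3, hw3⟩ := hw3
    -- generator w1
    obtain ⟨o, ho'⟩ := hOne
    have hoU : o ∉ U := Finset.disjoint_left.mp hdisj ho'
    have base1 : parP14 O U T {o} = (1, 0, ((({o} : Finset (Fin (m+n))) ∩ T).card : ZMod 2)) := by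
      simp [parP14, Prod.ext_iff, Finset.singleton_inter_of_mem ho',
        Finset.singleton_inter_of_notMem hoU]
    have hw1 : ∃ w1 : Finset (Fin (m + n)), parP14 O U T w1 = (1, 0, 0) := by
      rcases zmod2_cases ((({o} : Finset (Fin (m+n))) ∩ T).card : ZMod 2) with h | h
      · exact ⟨{o}, by rw [base1, h]⟩
      · refine ⟨symmDiff {o} w3, ?_⟩
        rw [parP14_symmDiff, base1, h, hw3]
        decide
    obtain ⟨w1, hw1⟩ := hw1
    -- generator w2
    obtain ⟨u, hu'⟩ := hUne
    have huO : u ∉ O := Finset.disjoint_right.mp hdisj hu'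
    have base2 : parP14 O U T {u} = (0, 1, ((({u} : Finset (Fin (m+n))) ∩ T).card : ZMod 2)) := by
      simp [parP14, Prod.ext_iff, Finset.singleton_inter_of_mem hu',
        Finset.singleton_inter_of_notMem huO]
    have hw2 : ∃ w2 : Finset (Fin (m + n)), parP14 O U T w2 = (0, 1, 0) := by
      rcases zmod2_cases ((({u} : Finset (Fin (m+n))) ∩ T).card : ZMod 2) with h | h
      · exact ⟨{u}, by rw [base2, h]⟩
      · refine ⟨symmDiff {u} w3, ?_⟩
        rw [parP14_symmDiff, base2, h, hw3]
        decide
    obtain ⟨w2, hw2⟩ := hw2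
    have hfilter : (Finset.univ.filter (fun S : Finset (Fin (m + n)) =>
          S.Nonempty ∧ Even ((S ∩ O).card) ∧ Even ((S ∩ U).card) ∧ Odd ((S ∩ T).card)))
        = Finset.univ.filter (fun S : Finset (Fin (m + n)) => parP14 O U T S = (0, 0, 1)) := by
      ext S
      simp only [Finset.mem_filter, Finset.mem_univ, true_and, parP14, Prod.ext_iff,
        zmod2_cast_zero, zmod2_cast_one]
      constructor
      · rintro ⟨_, h1, h2, h3⟩; exact ⟨h1, h2, h3⟩
      · rintro ⟨h1, h2, h3⟩
        refine ⟨?_, h1, h2, h3⟩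
        obtain ⟨x, hx⟩ := Finset.card_pos.mp h3.pos
        exact ⟨x, (Finset.mem_inter.mp hx).1⟩
    rw [hfilter, count_key14 O U T w1 w2 w3 hw1 hw2 hw3, Fintype.card_fin]
  -- the value of the linear functional at a vertex
  have valT : ∀ T : Finset (Fin (m + n)),
      (∑ S : DIdx m n,
        (if Even ((S.val ∩ O).card) ∧ Even ((S.val ∩ U).card) then dvecD m n T S else 0))
      = ((Finset.univ.filter (fun S : Finset (Fin (m + n)) =>
          S.Nonempty ∧ Even ((S ∩ O).card) ∧ Even ((S ∩ U).card) ∧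
            Odd ((S ∩ T).card))).card : ℝ) := by
    intro T
    have step1 : ∀ S : DIdx m n,
        (if Even ((S.val ∩ O).card) ∧ Even ((S.val ∩ U).card) then dvecD m n T S else 0)
        = (if (Even ((S.val ∩ O).card) ∧ Even ((S.val ∩ U).card) ∧ Odd ((S.val ∩ T).card))
            then (1 : ℝ) else 0) := by
      intro S
      simp only [dvecD]
      split_ifs <;> first | rfl | tauto
    rw [Finset.sum_congr rfl (fun S _ => step1 S)]
    have hsub := Finset.sum_subtype (p := DFace m n) (F := inferInstance) (Finset.univ.filter (DFace m n))
      (by intro x; simp) (fun S : Finset (Fin (m + n)) =>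
        if (Even ((S ∩ O).card) ∧ Even ((S ∩ U).card) ∧ Odd ((S ∩ T).card))
          then (1 : ℝ) else 0)
    rw [← hsub, Finset.sum_boole]
    congr 1
    congr 1
    rw [Finset.filter_filter]
    ext S
    simp only [Finset.mem_filter, Finset.mem_univ, true_and]
    constructor
    · rintro ⟨hDF, h1, h2, h3⟩; exact ⟨hDF.1, h1, h2, h3⟩
    · rintro ⟨hne, h1, h2, h3⟩; exact ⟨parta S hne h1 h2, h1, h2, h3⟩
  -- natural-number bound at every vertex
  have valbound : ∀ T : Finset (Fin (m + n)),
      (Finset.univ.filter (fun S : Finset (Fin (m + n)) =>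
          S.Nonempty ∧ Even ((S ∩ O).card) ∧ Even ((S ∩ U).card) ∧
            Odd ((S ∩ T).card))).card ≤ 2 ^ (m + n - 3) := by
    intro T
    by_cases hT : T = ∅ ∨ T = O ∨ T = U ∨ T = O ∪ U
    · rw [partc T hT]; positivity
    · push_neg at hT
      rw [partb T hT.1.ne_empty hT.2.1 hT.2.2.1 hT.2.2.2]
  refine ⟨parta, partb, partc, ?_, ?_⟩
  -- part (d): validity on the convex hull
  · intro x hx
    set f : (DIdx m n → ℝ) → ℝ := fun x => ∑ S : DIdx m n,
      (if Even ((S.val ∩ O).card) ∧ Even ((S.val ∩ U).card) then x S else 0) with hf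
    have hlin : IsLinearMap ℝ f := by
      constructor
      · intro x y
        rw [hf]
        simp only []
        rw [← Finset.sum_add_distrib]
        apply Finset.sum_congr rfl
        intro S _
        split_ifs <;> simp
      · intro c x
        rw [hf]
        simp only [smul_eq_mul]
        rw [Finset.mul_sum]
        apply Finset.sum_congr rfl
        intro S _
        split_ifs <;> simp
    have hrange : Set.range (dvecD m n) ⊆ {y | f y ≤ 2 ^ (m + n - 3)} := by
      rintro _ ⟨T, rfl⟩
      show f (dvecD m n T) ≤ _
      rw [hf]
      simp only []
      rw [valT T]
      calc ((Finset.univ.filter (fun S : Finset (Fin (m + n)) =>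
              S.Nonempty ∧ Even ((S ∩ O).card) ∧ Even ((S ∩ U).card) ∧
                Odd ((S ∩ T).card))).card : ℝ)
          ≤ ((2 ^ (m + n - 3) : ℕ) : ℝ) := Nat.cast_le.mpr (valbound T)
        _ = 2 ^ (m + n - 3) := by push_cast; ring
    have hsubset := convexHull_min hrange (convex_halfSpace_le hlin (2 ^ (m + n - 3)))
    exact hsubset hx
  -- part (e): characterisation of equality
  · intro T
    rw [valT T]
    constructor
    · intro h hbad
      rw [partc T hbad] at h
      have hpos : (0 : ℝ) < 2 ^ (m + n - 3) := by positivity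
      rw [Nat.cast_zero] at h
      linarith
    · intro h
      push_neg at h
      rw [partb T h.1.ne_empty h.2.1 h.2.2.1 h.2.2.2]
      push_cast; ring
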